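/- Let x > 0 and let d_1, …, d_n be positive real numbers. Then 1 − (1/x)·∑_{i=1}^n (i·d_i − x)·∏_{j=1}^i x/(x+d_j) = (n+1)·x^n / ∏_{j=1}^n (x+d_j). -/

import Mathlib

/-- Closed form for the partial sums: for `x > 0` and positive `d_1, …, d_n`,
`1 − (1/x)·∑_{i=1}^n (i·d_i − x)·∏_{j=1}^i x/(x+d_j) = (n+1)·x^n / ∏_{j=1}^n (x+d_j)`. -/
theorem silicosis_partial_sum_identity (x : ℝ) (hx : 0 < x) (n : ℕ) (d : ℕ → ℝ)
    (hd : ∀ i ∈ Finset.Icc 1 n, 0 < d i) :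
    1 - (1 / x) * ∑ i ∈ Finset.Icc 1 n,
        (((i : ℝ) * d i - x) * ∏ j ∈ Finset.Icc 1 i, x / (x + d j)) =
      ((n : ℝ) + 1) * x ^ n / ∏ j ∈ Finset.Icc 1 n, (x + d j) := by
  induction n with
  | zero => simp
  | succ n ih =>
    have hd' : ∀ i ∈ Finset.Icc 1 n, 0 < d i := fun i hi => by
      apply hd; rw [Finset.mem_Icc] at hi ⊢; omega
    have hpos : ∀ j ∈ Finset.Icc 1 (n + 1), 0 < x + d j := fun j hj =>
      add_pos hx (hd j hj)
    have hP : (0 : ℝ) < ∏ j ∈ Finset.Icc 1 n, (x + d j) :=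
      Finset.prod_pos fun j hj => hpos j (by rw [Finset.mem_Icc] at hj ⊢; omega)
    have hmem : n + 1 ∈ Finset.Icc 1 (n + 1) := by simp
    have hd1 : 0 < x + d (n + 1) := hpos _ hmem
    have hsum : Finset.Icc 1 (n + 1) = insert (n + 1) (Finset.Icc 1 n) := by
      ext j; simp [Finset.mem_Icc]; omega
    have hprodx : ∀ m : ℕ, (∀ j ∈ Finset.Icc 1 m, 0 < x + d j) →
        (∏ j ∈ Finset.Icc 1 m, x / (x + d j)) =
          x ^ m / ∏ j ∈ Finset.Icc 1 m, (x + d j) := by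
      intro m hm
      rw [Finset.prod_div_distrib, Finset.prod_const, Nat.card_Icc]
      simp
    rw [hsum, Finset.sum_insert (by simp), Finset.prod_insert (by simp)]
    have key := ih hd'
    rw [mul_add, ← sub_sub, sub_right_comm, key, hsum, Finset.prod_insert (by simp),
      hprodx n (fun j hj => hpos j (by rw [Finset.mem_Icc] at hj ⊢; omega))]
    push_cast
    field_simp
    ring
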